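/- arXiv:2308.06495 — 3 statements merged into one kernel-verified Lean document; each statement's English description precedes it below -/
import Mathlib

section
/- Let G : [0,1] → [0,∞) be continuous, increasing, positive on (0,1] with G(0) = 0, satisfying (ExpDec): liminf_{x→0⁺} x·log(1/G(x)) > 0, and (LogLogInt): ∫₀^d log log(1/G(x)) dx < ∞ for some d > 0. Then the sequence M_n = 2·∫₀¹ G(1−r)·r^{2n+1} dr, n ≥ 0, is an admissible sequence. -/
open MeasureTheory Set Filter
open scoped Real ENNReal Topology

noncomputable section

/-- An admissible sequence: positive, decreasing to 0, eventually logarithmically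
convex, decaying at least like exp(-d√n), and with ∑ log(1/Mₙ)/(1+n²) < ∞. -/
def AdmissibleSeq (M : ℕ → ℝ) : Prop :=
  (∀ n, 0 < M n) ∧
  (∀ m n : ℕ, m ≤ n → M n ≤ M m) ∧
  Tendsto M atTop (𝓝 0) ∧
  (∃ N : ℕ, ∀ n ≥ N,
    2 * Real.log (M (n + 1)) ≤ Real.log (M (n + 2)) + Real.log (M n)) ∧
  (∃ d > (0:ℝ), ∃ N : ℕ, ∀ n ≥ N, M n ≤ Real.exp (-d * Real.sqrt n)) ∧
  Summable (fun n : ℕ => Real.log (1 / M n) / (1 + (n : ℝ) ^ 2))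

lemma aux_sq_le {A B C : ℝ} (hA : 0 < A) (h : ∀ t : ℝ, 0 ≤ A*t^2 + 2*B*t + C) :
    B^2 ≤ A*C := by
  have h2 := h (-B/A)
  have hA' : A ≠ 0 := ne_of_gt hA
  have h3 : 0 ≤ A * (-B/A)^2 + 2*B*(-B/A) + C := h2
  have h4 : A * (-B/A)^2 + 2*B*(-B/A) + C = C - B^2/A := by field_simp; ring
  rw [h4] at h3
  have h5 : B^2/A ≤ C := by linarith
  calc B^2 = (B^2/A)*A := by field_simp
    _ ≤ C*A := mul_le_mul_of_nonneg_right h5 hA.le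
    _ = A*C := by ring

lemma aux_neg_log_one_sub {u : ℝ} (h0 : 0 ≤ u) (h1 : u ≤ 1/2) :
    -Real.log (1 - u) ≤ 2 * u := by
  have hpos : (0:ℝ) < 1 - u := by linarith
  have h3 : Real.exp (-(2*u)) ≤ 1 - u := by
    have h4 : 1 + 2*u ≤ Real.exp (2*u) := by
      have := Real.add_one_le_exp (2*u); linarith
    have h5 : Real.exp (-(2*u)) = (Real.exp (2*u))⁻¹ := by
      rw [Real.exp_neg]
    rw [h5]
    have h6 : (Real.exp (2*u))⁻¹ ≤ (1 + 2*u)⁻¹ := by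
      apply inv_anti₀ (by linarith) h4
    have h7 : (1 + 2*u)⁻¹ ≤ 1 - u := by
      rw [inv_le_iff_one_le_mul₀ (by linarith)]
      nlinarith
    linarith
  have := (Real.le_log_iff_exp_le hpos).2 h3
  linarith

lemma aux_harmonic_le (K : ℕ) :
    ∑ n ∈ Finset.range K, (1:ℝ)/((n:ℝ)+2) ≤ Real.log ((K:ℝ)+1) := by
  have key : ∀ n : ℕ, (1:ℝ)/((n:ℝ)+2) ≤ Real.log ((n:ℝ)+2) - Real.log ((n:ℝ)+1) := by
    intro n
    have h1 : (0:ℝ) < (n:ℝ)+1 := by positivity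
    have h2 : (0:ℝ) < (n:ℝ)+2 := by positivity
    have h3 : Real.log (((n:ℝ)+1)/((n:ℝ)+2)) ≤ ((n:ℝ)+1)/((n:ℝ)+2) - 1 :=
      Real.log_le_sub_one_of_pos (by positivity)
    rw [Real.log_div (ne_of_gt h1) (ne_of_gt h2)] at h3
    have h4 : ((n:ℝ)+1)/((n:ℝ)+2) - 1 = -(1/((n:ℝ)+2)) := by field_simp; ring
    rw [h4] at h3; linarith
  calc ∑ n ∈ Finset.range K, (1:ℝ)/((n:ℝ)+2)
      ≤ ∑ n ∈ Finset.range K, (Real.log ((n:ℝ)+2) - Real.log ((n:ℝ)+1)) :=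
        Finset.sum_le_sum (fun n _ => key n)
    _ = Real.log ((K:ℝ)+1) - Real.log ((0:ℝ)+1) := by
        rw [Finset.sum_sub_distrib]
        have := Finset.sum_range_sub (fun n : ℕ => Real.log ((n:ℝ)+1)) K
        rw [Finset.sum_sub_distrib] at this
        have he : ∀ n : ℕ, Real.log ((n:ℝ)+2) = Real.log (((n+1:ℕ):ℝ)+1) := by
          intro n; push_cast; ring_nf
        simp only [he]
        convert this using 3 <;> push_cast <;> ring
    _ ≤ Real.log ((K:ℝ)+1) := by simp

lemma aux_amgm {c u K : ℝ} (hc : 0 < c) (hu : 0 < u) (hK : 0 ≤ K) :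
    2 * Real.sqrt (c*K) ≤ c/u + K*u := by
  have h1 : c*K = (c/u) * (K*u) := by field_simp
  have h2 : Real.sqrt (c*K) = Real.sqrt (c/u) * Real.sqrt (K*u) := by
    rw [h1, Real.sqrt_mul (by positivity)]
  have h3 := two_mul_le_add_sq (Real.sqrt (c/u)) (Real.sqrt (K*u))
  rw [Real.sq_sqrt (by positivity), Real.sq_sqrt (by positivity)] at h3
  calc 2 * Real.sqrt (c*K) = 2 * Real.sqrt (c/u) * Real.sqrt (K*u) := by rw [h2]; ring
    _ ≤ c/u + K*u := h3

lemma aux_not_mem {A : Set ℝ} {δ y : ℝ} (hA : A ⊆ Set.Ioc 0 δ)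
    (hdc : ∀ x ∈ A, Set.Ioc 0 x ⊆ A) (hy : y ∈ Set.Ioc 0 δ)
    (hlt : (volume A).toReal < y) : y ∉ A := by
  intro hyA
  have h1 : Set.Ioc (0:ℝ) y ⊆ A := hdc y hyA
  have h2 : ENNReal.ofReal y ≤ volume A := by
    have := measure_mono (μ := volume) h1
    simpa [Real.volume_Ioc] using this
  have h3 : volume A ≤ ENNReal.ofReal δ := by
    have := measure_mono (μ := volume) hA
    simpa [Real.volume_Ioc] using this
  have h4 : volume A ≠ ⊤ := ne_top_of_le_ne_top ENNReal.ofReal_ne_top h3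
  have h5 : y ≤ (volume A).toReal := by
    have := ENNReal.toReal_mono h4 h2
    simpa [ENNReal.toReal_ofReal hy.1.le] using this
  linarith

set_option maxHeartbeats 2000000 in
/-- **Moments of G are admissible.** If G satisfies (ExpDec) and (LogLogInt), then
Mₙ = 2∫₀¹ G(1-r) r^{2n+1} dr is an admissible sequence. -/
theorem moments_of_G_admissible
    (G : ℝ → ℝ)
    (hGcont : ContinuousOn G (Set.Icc 0 1))
    (hGmono : MonotoneOn G (Set.Icc 0 1))
    (hGpos : ∀ x ∈ Set.Ioc (0:ℝ) 1, 0 < G x) (hG0 : G 0 = 0)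
    (hExpDec : 0 < Filter.liminf (fun x : ℝ => x * Real.log (1 / G x)) (𝓝[>] (0:ℝ)))
    (hLogLogInt : ∃ d > (0:ℝ),
      ∫⁻ x in Set.Ioc (0:ℝ) d, ENNReal.ofReal (Real.log (Real.log (1 / G x))) < ⊤) :
    AdmissibleSeq (fun n : ℕ => 2 * ∫ r in Set.Ioo (0:ℝ) 1, G (1 - r) * r ^ (2 * n + 1)) := by
  -- ## basic facts about the integrand
  have hGc1 : ∀ k : ℕ, ContinuousOn (fun r : ℝ => G (1 - r) * r ^ k) (Set.Icc 0 1) := by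
    intro k
    have h1 : ContinuousOn (fun r : ℝ => G (1 - r)) (Set.Icc 0 1) := by
      apply hGcont.comp ((continuous_const.sub continuous_id).continuousOn)
      intro x hx
      exact ⟨by simpa using hx.2, by simp; linarith [hx.1]⟩
    exact h1.mul ((continuous_pow k).continuousOn)
  have hInt : ∀ k : ℕ, IntegrableOn (fun r : ℝ => G (1 - r) * r ^ k) (Set.Ioo 0 1) := by
    intro k
    exact ((hGc1 k).integrableOn_Icc).mono_set Set.Ioo_subset_Icc_self
  have hfpos : ∀ (k : ℕ), ∀ r ∈ Set.Ioo (0:ℝ) 1, 0 < G (1-r) * r^k := by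
    intro k r hr
    exact mul_pos (hGpos _ ⟨by linarith [hr.2], by linarith [hr.1]⟩) (pow_pos hr.1 k)
  have hJpos : ∀ n : ℕ, 0 < ∫ r in Set.Ioo (0:ℝ) 1, G (1 - r) * r ^ (2*n+1) := by
    intro n
    rw [setIntegral_pos_iff_support_of_nonneg_ae]
    · apply lt_of_lt_of_le _ (measure_mono (t := Function.support (fun r : ℝ => G (1-r) * r^(2*n+1)) ∩ Set.Ioo 0 1) ?_)
      · exact (Set.Ioo (0:ℝ) 1)
      · simp [Real.volume_Ioo]
      · intro r hr
        exact ⟨ne_of_gt (hfpos _ r hr), hr⟩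
    · exact ae_restrict_of_forall_mem measurableSet_Ioo (fun r hr => (hfpos _ r hr).le)
    · exact hInt _
  have hJmono : ∀ m n : ℕ, m ≤ n → (∫ r in Set.Ioo (0:ℝ) 1, G (1 - r) * r ^ (2*n+1))
      ≤ ∫ r in Set.Ioo (0:ℝ) 1, G (1 - r) * r ^ (2*m+1) := by
    intro m n hmn
    apply setIntegral_mono_on (hInt _) (hInt _) measurableSet_Ioo
    intro r hr
    apply mul_le_mul_of_nonneg_left _ (hGpos _ ⟨by linarith [hr.2], by linarith [hr.1]⟩).le
    exact pow_le_pow_of_le_one hr.1.le hr.2.le (by omega)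
  -- ## consequence of (ExpDec)
  have hkey : ∃ c > (0:ℝ), ∃ δc > (0:ℝ), ∀ x ∈ Set.Ioc (0:ℝ) δc,
      x ∈ Set.Ioc (0:ℝ) 1 ∧ G x ≤ Real.exp (-(c/x)) ∧ c/x ≤ Real.log (1/G x) := by
    -- G tends to 0 from the right
    have hGt : Tendsto G (𝓝[>] (0:ℝ)) (𝓝 0) := by
      have h1 : ContinuousWithinAt G (Set.Icc 0 1) 0 := hGcont 0 ⟨le_refl 0, zero_le_one⟩
      have h2 : Tendsto G (𝓝[Set.Icc (0:ℝ) 1] 0) (𝓝 0) := by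
        have := h1.tendsto
        rwa [hG0] at this
      apply h2.mono_left
      rw [← nhdsWithin_Ioc_eq_nhdsGT (zero_lt_one (α := ℝ))]
      exact nhdsWithin_mono _ Set.Ioc_subset_Icc_self
    have hev1 : ∀ᶠ x in 𝓝[>] (0:ℝ), G x < 1 := hGt.eventually_lt_const one_pos
    have hev2 : ∀ᶠ x in 𝓝[>] (0:ℝ), x ∈ Set.Ioc (0:ℝ) 1 :=
      Ioc_mem_nhdsGT_of_mem ⟨le_refl 0, zero_lt_one⟩
    have hbdd : IsBoundedUnder (· ≥ ·) (𝓝[>] (0:ℝ)) (fun x => x * Real.log (1 / G x)) := by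
      apply isBoundedUnder_of_eventually_ge (a := (0:ℝ))
      filter_upwards [hev1, hev2] with x h1 h2
      have hg : 0 < G x := hGpos x h2
      have : 0 ≤ Real.log (1 / G x) := by
        apply Real.log_nonneg
        rw [le_div_iff₀ hg]
        linarith
      exact mul_nonneg h2.1.le this
    set L := Filter.liminf (fun x : ℝ => x * Real.log (1 / G x)) (𝓝[>] (0:ℝ))
    have hc : (0:ℝ) < L/2 := by positivity
    have hev3 : ∀ᶠ x in 𝓝[>] (0:ℝ), L/2 < x * Real.log (1 / G x) :=
      eventually_lt_of_lt_liminf (by linarith) hbdd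
    have hall : ∀ᶠ x in 𝓝[>] (0:ℝ),
        (x ∈ Set.Ioc (0:ℝ) 1 ∧ G x < 1 ∧ L/2 < x * Real.log (1 / G x)) := by
      filter_upwards [hev1, hev2, hev3] with x h1 h2 h3
      exact ⟨h2, h1, h3⟩
    rw [eventually_iff, mem_nhdsGT_iff_exists_Ioc_subset] at hall
    obtain ⟨δc, hδc, hsub⟩ := hall
    rw [Set.mem_Ioi] at hδc
    refine ⟨L/2, hc, δc, hδc, ?_⟩
    intro x hx
    obtain ⟨hx1, hx2, hx3⟩ := hsub hx
    have hg : 0 < G x := hGpos x hx1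
    have h4 : (L/2)/x < Real.log (1/G x) := by
      rw [div_lt_iff₀ hx.1]
      calc L/2 < x * Real.log (1/G x) := hx3
        _ = Real.log (1/G x) * x := by ring
    refine ⟨hx1, ?_, h4.le⟩
    have h5 : Real.log (G x) < -((L/2)/x) := by
      rw [one_div, Real.log_inv] at h4
      linarith
    calc G x = Real.exp (Real.log (G x)) := (Real.exp_log hg).symm
      _ ≤ Real.exp (-((L/2)/x)) := Real.exp_le_exp.2 h5.le
  
  obtain ⟨c, hc, δc, hδc, hcδ⟩ := hkey
  have hGb : ∀ x ∈ Set.Ioc (0:ℝ) δc, G x ≤ Real.exp (-(c/x)) := fun x hx => (hcδ x hx).2.1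
  -- ## a uniform bound for G on [0,1]
  obtain ⟨C, hCb⟩ := isCompact_Icc.exists_bound_of_continuousOn hGcont
  have hC : ∀ x ∈ Set.Icc (0:ℝ) 1, G x ≤ C := by
    intro x hx
    have := hCb x hx
    rw [Real.norm_eq_abs] at this
    exact (le_abs_self _).trans this
  have hC0 : (0:ℝ) ≤ C := by
    have h1 := hCb 0 ⟨le_refl 0, zero_le_one⟩
    exact le_trans (norm_nonneg _) h1
  -- ## decay: eventual bound exp(-e √n)
  have hdecay : ∃ e > (0:ℝ), ∀ᶠ n : ℕ in atTop,
      2 * ∫ r in Set.Ioo (0:ℝ) 1, G (1 - r) * r ^ (2*n+1) ≤ Real.exp (-e * Real.sqrt n) := by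
    obtain ⟨δ', hδ'0, hδ'le, hδ'δc⟩ : ∃ t : ℝ, 0 < t ∧ t ≤ 1/2 ∧ t ≤ δc :=
      ⟨min δc (1/2), lt_min hδc (by norm_num), min_le_right _ _, min_le_left _ _⟩
    obtain ⟨ρ, hρ⟩ : ∃ ρ : ℝ, ρ = 1 - δ' := ⟨1 - δ', rfl⟩
    have hρ0 : 0 < ρ := by rw [hρ]; linarith
    have hρ1 : ρ < 1 := by rw [hρ]; linarith
    -- pointwise bound
    have hpt : ∀ n : ℕ, ∀ r ∈ Set.Ioo (0:ℝ) 1,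
        G (1-r) * r^(2*n+1) ≤ Real.exp (-(2*Real.sqrt (c*(2*n+1)))) + C * ρ^(2*n+1) := by
      intro n r hr
      rcases le_or_gt r ρ with hcase | hcase
      · have h1 : G (1-r) ≤ C := hC _ ⟨by linarith [hr.2], by linarith [hr.1]⟩
        have h2 : r^(2*n+1) ≤ ρ^(2*n+1) := pow_le_pow_left₀ hr.1.le hcase _
        have h3 : G (1-r) * r^(2*n+1) ≤ C * ρ^(2*n+1) := by
          apply mul_le_mul h1 h2 (pow_nonneg hr.1.le _) hC0
        exact h3.trans (le_add_of_nonneg_left (Real.exp_pos _).le)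
      · set u : ℝ := 1 - r with hu
        have hu0 : 0 < u := by rw [hu]; linarith [hr.2]
        have huδ : u ≤ δc := by
          have : u < δ' := by rw [hu, hρ] at *; linarith [hcase]
          linarith
        have h1 : G (1-r) ≤ Real.exp (-(c/u)) := hGb u ⟨hu0, huδ⟩
        have h2 : r ≤ Real.exp (-u) := by
          have := Real.add_one_le_exp (-u)
          rw [hu] at *; linarith
        have h3 : r^(2*n+1) ≤ Real.exp (((2*n+1:ℕ):ℝ) * (-u)) := by
          rw [Real.exp_nat_mul]
          exact pow_le_pow_left₀ hr.1.le h2 _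
        have h4 : G (1-r) * r^(2*n+1) ≤ Real.exp (-(c/u)) * Real.exp (((2*n+1:ℕ):ℝ) * (-u)) := by
          apply mul_le_mul h1 h3 (pow_nonneg hr.1.le _) (Real.exp_pos _).le
        rw [← Real.exp_add] at h4
        have h5 : -(c/u) + ((2*n+1:ℕ):ℝ) * (-u) ≤ -(2*Real.sqrt (c*(2*n+1))) := by
          have := aux_amgm (c := c) (u := u) (K := ((2*n+1:ℕ):ℝ)) hc hu0 (by positivity)
          push_cast at this ⊢
          nlinarith [this]
        have h6 := h4.trans (Real.exp_le_exp.2 h5)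
        exact h6.trans (le_add_of_nonneg_right (by positivity))
    -- integrate the bound
    have hMb : ∀ n : ℕ, 2 * ∫ r in Set.Ioo (0:ℝ) 1, G (1 - r) * r ^ (2*n+1)
        ≤ 2 * Real.exp (-(2*Real.sqrt (c*(2*n+1)))) + 2 * C * ρ^(2*n+1) := by
      intro n
      have h1 : ∫ r in Set.Ioo (0:ℝ) 1, G (1 - r) * r ^ (2*n+1)
          ≤ ∫ _ in Set.Ioo (0:ℝ) 1, (Real.exp (-(2*Real.sqrt (c*(2*n+1)))) + C * ρ^(2*n+1)) := by
        apply setIntegral_mono_on (hInt _) (integrableOn_const (by simp [Real.volume_Ioo]))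
          measurableSet_Ioo (hpt n)
      rw [setIntegral_const] at h1
      simp only [Real.volume_real_Ioo, sub_zero, zero_le_one, max_eq_left, one_smul] at h1
      linarith
    -- choose e
    obtain ⟨a, ha, ha0⟩ : ∃ a : ℝ, a = -Real.log ρ ∧ 0 < a := by
      refine ⟨-Real.log ρ, rfl, ?_⟩
      simp only [neg_pos]; exact Real.log_neg hρ0 hρ1
    obtain ⟨e, he0, he1', he2'⟩ : ∃ e : ℝ, 0 < e ∧ e ≤ Real.sqrt c ∧ e ≤ a/2 :=
      ⟨min (Real.sqrt c) (a/2), lt_min (Real.sqrt_pos.2 hc) (by linarith), min_le_left _ _, min_le_right _ _⟩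
    refine ⟨e, he0, ?_⟩
    -- tendsto facts
    have hsqrt_tendsto : Tendsto (fun n : ℕ => Real.sqrt n) atTop atTop := by
      have h1 : Tendsto (fun x : ℝ => x ^ (1/2 : ℝ)) atTop atTop := tendsto_rpow_atTop (by norm_num)
      have h2 := h1.comp (tendsto_natCast_atTop_atTop (R := ℝ))
      apply h2.congr
      intro n; simp [Real.sqrt_eq_rpow]
    have hexp0 : Tendsto (fun n : ℕ => Real.exp (-e * Real.sqrt n)) atTop (𝓝 0) := by
      apply Real.tendsto_exp_atBot.comp
      exact Tendsto.const_mul_atTop_of_neg (show -e < 0 by linarith) hsqrt_tendsto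
    have ev0 : ∀ᶠ n : ℕ in atTop, Real.exp (-e * Real.sqrt n) ≤ 1/4 :=
      hexp0.eventually_le_const (by norm_num)
    have hexp2 : Tendsto (fun n : ℕ => 2 * C * Real.exp (-(a/2) * n)) atTop (𝓝 0) := by
      have h1 : Tendsto (fun n : ℕ => -(a/2) * (n:ℝ)) atTop atBot :=
        Tendsto.const_mul_atTop_of_neg (show -(a/2) < 0 by linarith) (tendsto_natCast_atTop_atTop (R := ℝ))
      have := Real.tendsto_exp_atBot.comp h1
      simpa using this.const_mul (2*C)
    have ev2' : ∀ᶠ n : ℕ in atTop, 2 * C * Real.exp (-(a/2) * n) ≤ 1/2 :=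
      hexp2.eventually_le_const (by norm_num)
    filter_upwards [ev0, ev2', eventually_ge_atTop 1] with n h0 h2 hn1
    have hn1' : (1:ℝ) ≤ n := by exact_mod_cast hn1
    have hsnn : (0:ℝ) ≤ Real.sqrt n := Real.sqrt_nonneg _
    have hsn : Real.sqrt n ≤ n := by
      nlinarith [Real.sq_sqrt (show (0:ℝ) ≤ n by linarith), Real.one_le_sqrt.2 hn1']
    have he1 : e ≤ Real.sqrt c := he1'
    have he2 : e ≤ a/2 := he2'
    -- term 1
    have ht1 : 2 * Real.exp (-(2*Real.sqrt (c*(2*n+1)))) ≤ 1/2 * Real.exp (-e * Real.sqrt n) := by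
      have hs1 : e * Real.sqrt n + e * Real.sqrt n ≤ 2*Real.sqrt (c*(2*n+1)) := by
        have hA : e * Real.sqrt n ≤ Real.sqrt c * Real.sqrt n :=
          mul_le_mul_of_nonneg_right he1 hsnn
        have hB : Real.sqrt c * Real.sqrt n = Real.sqrt (c * n) := (Real.sqrt_mul hc.le _).symm
        have hCc : Real.sqrt (c*n) ≤ Real.sqrt (c*(2*n+1)) := by
          apply Real.sqrt_le_sqrt; nlinarith [hc.le]
        nlinarith [hA, hB, hCc]
      have : Real.exp (-(2*Real.sqrt (c*(2*n+1)))) ≤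
          Real.exp (-e * Real.sqrt n) * Real.exp (-e * Real.sqrt n) := by
        rw [← Real.exp_add]
        apply Real.exp_le_exp.2
        linarith
      nlinarith [this, Real.exp_pos (-e * Real.sqrt (n:ℝ)), h0,
        Real.exp_nonneg (-(2*Real.sqrt (c*(2*↑n+1))))]
    -- term 2
    have ht2 : 2 * C * ρ^(2*n+1) ≤ 1/2 * Real.exp (-e * Real.sqrt n) := by
      have hr1 : ρ^(2*n+1) = Real.exp (((2*n+1:ℕ):ℝ) * Real.log ρ) := by
        rw [Real.exp_nat_mul, Real.exp_log hρ0]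
      have hr2 : ((2*n+1:ℕ):ℝ) * Real.log ρ ≤ -(a/2) * n + (-e * Real.sqrt n) := by
        have h3 : ((2*n+1:ℕ):ℝ) * Real.log ρ = -(a * (2*n+1)) := by
          push_cast; rw [ha]; ring
        rw [h3]
        have h4 : e * Real.sqrt n ≤ (a/2) * n := by
          calc e * Real.sqrt n ≤ (a/2) * Real.sqrt n := mul_le_mul_of_nonneg_right he2 hsnn
            _ ≤ (a/2) * n := mul_le_mul_of_nonneg_left hsn (by linarith)
        have h5 : 0 ≤ a * ((n:ℝ)+1) := mul_nonneg ha0.le (by positivity)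
        push_cast
        linarith [h4, h5]
      calc 2 * C * ρ^(2*n+1) = 2 * C * Real.exp (((2*n+1:ℕ):ℝ) * Real.log ρ) := by rw [hr1]
        _ ≤ 2 * C * (Real.exp (-(a/2) * n) * Real.exp (-e * Real.sqrt n)) := by
            rw [← Real.exp_add]
            exact mul_le_mul_of_nonneg_left (Real.exp_le_exp.2 hr2) (by linarith)
        _ = (2 * C * Real.exp (-(a/2) * n)) * Real.exp (-e * Real.sqrt n) := by ring
        _ ≤ 1/2 * Real.exp (-e * Real.sqrt n) :=
            mul_le_mul_of_nonneg_right h2 (Real.exp_nonneg _)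
    calc 2 * ∫ r in Set.Ioo (0:ℝ) 1, G (1 - r) * r ^ (2*n+1)
        ≤ 2 * Real.exp (-(2*Real.sqrt (c*(2*n+1)))) + 2 * C * ρ^(2*n+1) := hMb n
      _ ≤ 1/2 * Real.exp (-e * Real.sqrt n) + 1/2 * Real.exp (-e * Real.sqrt n) := add_le_add ht1 ht2
      _ = Real.exp (-e * Real.sqrt n) := by ring
  
  -- ## tendsto 0
  have hMtend : Tendsto (fun n : ℕ => 2 * ∫ r in Set.Ioo (0:ℝ) 1, G (1 - r) * r ^ (2*n+1))
      atTop (𝓝 0) := by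
    obtain ⟨e, he0, hev⟩ := hdecay
    apply squeeze_zero' (Eventually.of_forall (fun n => by linarith [hJpos n])) hev
    apply Real.tendsto_exp_atBot.comp
    apply Tendsto.const_mul_atTop_of_neg (show -e < 0 by linarith)
    have h1 : Tendsto (fun x : ℝ => x ^ (1/2 : ℝ)) atTop atTop := tendsto_rpow_atTop (by norm_num)
    have h2 := h1.comp (tendsto_natCast_atTop_atTop (R := ℝ))
    apply h2.congr
    intro n; simp [Real.sqrt_eq_rpow]
  -- ## logarithmic convexity
  have hconvex : ∀ n : ℕ, 2 * Real.log (2 * ∫ r in Set.Ioo (0:ℝ) 1, G (1 - r) * r ^ (2*(n+1)+1))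
      ≤ Real.log (2 * ∫ r in Set.Ioo (0:ℝ) 1, G (1 - r) * r ^ (2*(n+2)+1))
        + Real.log (2 * ∫ r in Set.Ioo (0:ℝ) 1, G (1 - r) * r ^ (2*n+1)) := by
    intro n
    set J : ℕ → ℝ := fun k => ∫ r in Set.Ioo (0:ℝ) 1, G (1 - r) * r ^ (2*k+1) with hJ
    have hconv : (J (n+1))^2 ≤ J n * J (n+2) := by
      apply aux_sq_le (hJpos n)
      intro t
      have key : (J n) * t^2 + 2 * (J (n+1)) * t + J (n+2)
          = ∫ r in Set.Ioo (0:ℝ) 1, ((G (1-r) * r^(2*n+1)) * t^2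
              + ((G (1-r) * r^(2*(n+1)+1)) * (2*t) + G (1-r) * r^(2*(n+2)+1))) := by
        have e1 : ∫ r in Set.Ioo (0:ℝ) 1, ((G (1-r) * r^(2*n+1)) * t^2
              + ((G (1-r) * r^(2*(n+1)+1)) * (2*t) + G (1-r) * r^(2*(n+2)+1)))
            = (∫ r in Set.Ioo (0:ℝ) 1, (G (1-r) * r^(2*n+1)) * t^2)
              + ∫ r in Set.Ioo (0:ℝ) 1, ((G (1-r) * r^(2*(n+1)+1)) * (2*t)
                + G (1-r) * r^(2*(n+2)+1)) :=
          integral_add ((hInt (2*n+1)).mul_const _)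
            (((hInt (2*(n+1)+1)).mul_const _).add (hInt (2*(n+2)+1)))
        have e2 : ∫ r in Set.Ioo (0:ℝ) 1, ((G (1-r) * r^(2*(n+1)+1)) * (2*t)
              + G (1-r) * r^(2*(n+2)+1))
            = (∫ r in Set.Ioo (0:ℝ) 1, (G (1-r) * r^(2*(n+1)+1)) * (2*t))
              + ∫ r in Set.Ioo (0:ℝ) 1, G (1-r) * r^(2*(n+2)+1) :=
          integral_add ((hInt (2*(n+1)+1)).mul_const _) (hInt (2*(n+2)+1))
        have e3 : ∫ r in Set.Ioo (0:ℝ) 1, (G (1-r) * r^(2*n+1)) * t^2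
            = (∫ r in Set.Ioo (0:ℝ) 1, G (1-r) * r^(2*n+1)) * t^2 := integral_mul_const _ _
        have e4 : ∫ r in Set.Ioo (0:ℝ) 1, (G (1-r) * r^(2*(n+1)+1)) * (2*t)
            = (∫ r in Set.Ioo (0:ℝ) 1, G (1-r) * r^(2*(n+1)+1)) * (2*t) := integral_mul_const _ _
        rw [e1, e2, e3, e4, hJ]
        ring
      have hnn : 0 ≤ ∫ r in Set.Ioo (0:ℝ) 1, ((G (1-r) * r^(2*n+1)) * t^2
          + ((G (1-r) * r^(2*(n+1)+1)) * (2*t) + G (1-r) * r^(2*(n+2)+1))) := by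
        apply setIntegral_nonneg measurableSet_Ioo
        intro r hr
        have hG : 0 ≤ G (1-r) := (hGpos _ ⟨by linarith [hr.2], by linarith [hr.1]⟩).le
        have heq : (G (1-r) * r^(2*n+1)) * t^2
            + ((G (1-r) * r^(2*(n+1)+1)) * (2*t) + G (1-r) * r^(2*(n+2)+1))
            = (G (1-r) * r^(2*n+1)) * (t + r^2)^2 := by ring
        rw [heq]
        exact mul_nonneg (mul_nonneg hG (pow_nonneg hr.1.le _)) (sq_nonneg _)
      linarith [key ▸ hnn]
    have hM1 : (0:ℝ) < 2 * J (n+1) := by linarith [hJpos (n+1)]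
    have hM0 : (0:ℝ) < 2 * J n := by linarith [hJpos n]
    have hM2 : (0:ℝ) < 2 * J (n+2) := by linarith [hJpos (n+2)]
    have h1 : (2 * J (n+1))^2 ≤ (2 * J (n+2)) * (2 * J n) := by nlinarith [hconv]
    have h2 : Real.log ((2 * J (n+1))^2) ≤ Real.log ((2 * J (n+2)) * (2 * J n)) :=
      Real.log_le_log (by positivity) h1
    rw [Real.log_pow, Real.log_mul (ne_of_gt hM2) (ne_of_gt hM0)] at h2
    push_cast at h2
    linarith
  
  -- ## summability
  have hMpos : ∀ n : ℕ, 0 < 2 * ∫ r in Set.Ioo (0:ℝ) 1, G (1 - r) * r ^ (2*n+1) :=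
    fun n => by linarith [hJpos n]
  obtain ⟨dd, hdd0, hIdd⟩ := hLogLogInt
  obtain ⟨δ, hδ0, hδ18, hδδc, hδd⟩ : ∃ t : ℝ, 0 < t ∧ t ≤ 1/8 ∧ t ≤ δc ∧ t ≤ dd :=
    ⟨min (min δc dd) (1/8), lt_min (lt_min hδc hdd0) (by norm_num), min_le_right _ _,
      (min_le_left _ _).trans (min_le_left _ _), (min_le_left _ _).trans (min_le_right _ _)⟩
  have hhpos : ∀ x ∈ Set.Ioc (0:ℝ) δ, 0 < Real.log (1 / G x) := by
    intro x hx
    have hx' : x ∈ Set.Ioc (0:ℝ) δc := ⟨hx.1, hx.2.trans hδδc⟩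
    have h1 := (hcδ x hx').2.2
    have h2 : 0 < c/x := div_pos hc hx.1
    linarith
  have hI : ∫⁻ x in Set.Ioc (0:ℝ) δ, ENNReal.ofReal (Real.log (Real.log (1 / G x))) < ⊤ :=
    lt_of_le_of_lt (lintegral_mono_set (Set.Ioc_subset_Ioc_right hδd)) hIdd
  have hSummable : Summable (fun n : ℕ =>
      Real.log (1 / (2 * ∫ r in Set.Ioo (0:ℝ) 1, G (1 - r) * r ^ (2*n+1))) / (1 + (n:ℝ)^2)) := by
    set A : ℕ → Set ℝ := fun k => {x | x ∈ Set.Ioc 0 δ ∧ Real.sqrt k < Real.log (1 / G x)} with hA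
    have hδIcc : Set.Ioc (0:ℝ) δ ⊆ Set.Icc 0 1 := fun x hx => ⟨hx.1.le, by linarith [hx.2]⟩
    have hAsub : ∀ k, A k ⊆ Set.Ioc 0 δ := fun k x hx => hx.1
    have hhanti : ∀ x ∈ Set.Ioc (0:ℝ) δ, ∀ y ∈ Set.Ioc (0:ℝ) δ, x ≤ y →
        Real.log (1 / G y) ≤ Real.log (1 / G x) := by
      intro x hx y hy hxy
      have hgx : 0 < G x := hGpos x ⟨hx.1, by linarith [hx.2]⟩
      have hgy : 0 < G y := hGpos y ⟨hy.1, by linarith [hy.2]⟩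
      have h1 : G x ≤ G y := hGmono (hδIcc hx) (hδIcc hy) hxy
      rw [one_div, one_div, Real.log_inv, Real.log_inv]
      exact neg_le_neg (Real.log_le_log hgx h1)
    have hAdc : ∀ k, ∀ x ∈ A k, Set.Ioc 0 x ⊆ A k := by
      intro k x hx y hy
      have hyδ : y ∈ Set.Ioc (0:ℝ) δ := ⟨hy.1, hy.2.trans hx.1.2⟩
      exact ⟨hyδ, lt_of_lt_of_le hx.2 (hhanti y hyδ x hx.1 hy.2)⟩
    have hAmeas : ∀ k, MeasurableSet (A k) := by
      intro k
      apply Set.OrdConnected.measurableSet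
      constructor
      intro x hx y hy z hz
      have hzδ : z ∈ Set.Ioc (0:ℝ) δ := ⟨lt_of_lt_of_le hx.1.1 hz.1, le_trans hz.2 hy.1.2⟩
      exact ⟨hzδ, lt_of_lt_of_le hy.2 (hhanti z hzδ y hy.1 hz.2)⟩
    -- summability of 1/(n+2) * vol(A (n+2))
    have hw : ∀ n : ℕ, ENNReal.ofReal (1/((n:ℝ)+2)) * volume (A (n+2)) =
        ∫⁻ x, (A (n+2)).indicator (fun _ => ENNReal.ofReal (1/((n:ℝ)+2))) x := by
      intro n
      rw [lintegral_indicator_const (hAmeas _)]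
    have htsum : ∑' n : ℕ, ENNReal.ofReal (1/((n:ℝ)+2)) * volume (A (n+2)) =
        ∫⁻ x, ∑' n : ℕ, (A (n+2)).indicator (fun _ => ENNReal.ofReal (1/((n:ℝ)+2))) x := by
      simp_rw [hw]
      exact (lintegral_tsum (fun n => (measurable_const.indicator (hAmeas _)).aemeasurable)).symm
    have hofmax : ∀ a : ℝ, ENNReal.ofReal (max a 0) = ENNReal.ofReal a := by
      intro a
      rcases le_total a 0 with h | h
      · rw [max_eq_right h, ENNReal.ofReal_zero, ENNReal.ofReal_eq_zero.2 h]
      · rw [max_eq_left h]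
    have hinner : ∀ x : ℝ, (∑' n : ℕ, (A (n+2)).indicator
          (fun _ => ENNReal.ofReal (1/((n:ℝ)+2))) x)
        ≤ (Set.Ioc (0:ℝ) δ).indicator
          (fun x => ENNReal.ofReal (Real.log 3 + 2 * max (Real.log (Real.log (1 / G x))) 0)) x := by
      intro x
      by_cases hx : x ∈ Set.Ioc (0:ℝ) δ
      · set u : ℝ := Real.log (1 / G x) with hu
        have hu0 : 0 < u := hhpos x hx
        set um : ℝ := max u 1 with hum
        have hum1 : (1:ℝ) ≤ um := le_max_right _ _
        set K : ℕ := ⌈um^2⌉₊ with hK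
        have hsupp : ∀ n : ℕ, n ∉ Finset.range K →
            (A (n+2)).indicator (fun _ => ENNReal.ofReal (1/((n:ℝ)+2))) x = 0 := by
          intro n hn
          rw [Finset.mem_range, not_lt] at hn
          apply Set.indicator_of_notMem
          intro hmem
          have h1 : Real.sqrt ((n:ℝ)+2) < u := by
            have := hmem.2
            rw [← hu] at this
            convert this using 2
            push_cast; ring
          have h2 : ((n:ℝ)+2) < um^2 := by
            have h3 : Real.sqrt ((n:ℝ)+2) < um := lt_of_lt_of_le h1 (le_max_left _ _)
            nlinarith [Real.sq_sqrt (show (0:ℝ) ≤ (n:ℝ)+2 by positivity),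
              Real.sqrt_nonneg ((n:ℝ)+2)]
          have h4 : um^2 ≤ (K:ℝ) := Nat.le_ceil _
          have h5 : ((n:ℝ)+2) < (K:ℝ) := lt_of_lt_of_le h2 h4
          have h6 : (((n+2:ℕ)):ℝ) < (K:ℝ) := by push_cast; linarith
          have h7 : n + 2 < K := by exact_mod_cast h6
          omega
        rw [tsum_eq_sum hsupp]
        have hstep1 : ∑ n ∈ Finset.range K, (A (n+2)).indicator
              (fun _ => ENNReal.ofReal (1/((n:ℝ)+2))) x
            ≤ ∑ n ∈ Finset.range K, ENNReal.ofReal (1/((n:ℝ)+2)) := by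
          apply Finset.sum_le_sum
          intro n _
          exact Set.indicator_le_self' (fun _ _ => zero_le) x
        have hstep2 : ∑ n ∈ Finset.range K, ENNReal.ofReal (1/((n:ℝ)+2)) =
            ENNReal.ofReal (∑ n ∈ Finset.range K, 1/((n:ℝ)+2)) := by
          rw [ENNReal.ofReal_sum_of_nonneg]
          intro n _
          positivity
        have hstep3 : (∑ n ∈ Finset.range K, 1/((n:ℝ)+2)) ≤ Real.log ((K:ℝ)+1) :=
          aux_harmonic_le K
        have hstep4 : Real.log ((K:ℝ)+1) ≤ Real.log 3 + 2 * max (Real.log u) 0 := by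
          have h1 : (K:ℝ) < um^2 + 1 := by
            rw [hK]
            exact Nat.ceil_lt_add_one (by positivity)
          have h2 : (K:ℝ) + 1 ≤ 3 * um^2 := by nlinarith
          have h3 : Real.log ((K:ℝ)+1) ≤ Real.log (3 * um^2) := by
            apply Real.log_le_log (by positivity) h2
          have h4 : Real.log (3 * um^2) = Real.log 3 + 2 * Real.log um := by
            rw [Real.log_mul (by norm_num) (by positivity), Real.log_pow]
            push_cast; ring
          have h5 : Real.log um = max (Real.log u) 0 := by
            rcases le_total u 1 with h | h
            · rw [hum, max_eq_right h, Real.log_one, max_eq_right (Real.log_nonpos hu0.le h)]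
            · rw [hum, max_eq_left h, max_eq_left (Real.log_nonneg h)]
          rw [h4, h5] at h3
          exact h3
        calc ∑ n ∈ Finset.range K, (A (n+2)).indicator
              (fun _ => ENNReal.ofReal (1/((n:ℝ)+2))) x
            ≤ ENNReal.ofReal (∑ n ∈ Finset.range K, 1/((n:ℝ)+2)) := by rw [← hstep2]; exact hstep1
          _ ≤ ENNReal.ofReal (Real.log 3 + 2 * max (Real.log u) 0) :=
              ENNReal.ofReal_le_ofReal (le_trans hstep3 hstep4)
          _ = (Set.Ioc (0:ℝ) δ).indicator
              (fun x => ENNReal.ofReal (Real.log 3 + 2 * max (Real.log (Real.log (1 / G x))) 0)) x := by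
              rw [Set.indicator_of_mem hx]
      · have hz : ∀ n : ℕ, (A (n+2)).indicator
            (fun _ => ENNReal.ofReal (1/((n:ℝ)+2))) x = 0 := by
          intro n
          apply Set.indicator_of_notMem
          intro hmem
          exact hx (hAsub _ hmem)
        simp only [hz, tsum_zero]
        rw [Set.indicator_of_notMem hx]
    -- integrate the inner bound
    have hbound : (∑' n : ℕ, ENNReal.ofReal (1/((n:ℝ)+2)) * volume (A (n+2)))
        ≤ ∫⁻ x in Set.Ioc (0:ℝ) δ,
            ENNReal.ofReal (Real.log 3 + 2 * max (Real.log (Real.log (1 / G x))) 0) := by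
      rw [htsum, ← lintegral_indicator measurableSet_Ioc]
      exact lintegral_mono hinner
    have hb2 : (∫⁻ x in Set.Ioc (0:ℝ) δ,
          ENNReal.ofReal (Real.log 3 + 2 * max (Real.log (Real.log (1 / G x))) 0))
        ≤ ENNReal.ofReal (Real.log 3) * ENNReal.ofReal δ +
          2 * ∫⁻ x in Set.Ioc (0:ℝ) δ, ENNReal.ofReal (Real.log (Real.log (1 / G x))) := by
      have hpt : ∀ x : ℝ, ENNReal.ofReal (Real.log 3 + 2 * max (Real.log (Real.log (1 / G x))) 0)
          ≤ ENNReal.ofReal (Real.log 3) + 2 * ENNReal.ofReal (Real.log (Real.log (1 / G x))) := by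
        intro x
        calc ENNReal.ofReal (Real.log 3 + 2 * max (Real.log (Real.log (1 / G x))) 0)
            ≤ ENNReal.ofReal (Real.log 3) +
              ENNReal.ofReal (2 * max (Real.log (Real.log (1 / G x))) 0) := ENNReal.ofReal_add_le
          _ = ENNReal.ofReal (Real.log 3) +
              2 * ENNReal.ofReal (Real.log (Real.log (1 / G x))) := by
              rw [ENNReal.ofReal_mul (by norm_num : (0:ℝ) ≤ 2), hofmax]
              norm_num
      calc (∫⁻ x in Set.Ioc (0:ℝ) δ,
            ENNReal.ofReal (Real.log 3 + 2 * max (Real.log (Real.log (1 / G x))) 0))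
          ≤ ∫⁻ x in Set.Ioc (0:ℝ) δ, (ENNReal.ofReal (Real.log 3) +
              2 * ENNReal.ofReal (Real.log (Real.log (1 / G x)))) := lintegral_mono hpt
        _ = ENNReal.ofReal (Real.log 3) * volume (Set.Ioc (0:ℝ) δ) +
            ∫⁻ x in Set.Ioc (0:ℝ) δ, 2 * ENNReal.ofReal (Real.log (Real.log (1 / G x))) := by
            rw [lintegral_add_left measurable_const, setLIntegral_const]
        _ = ENNReal.ofReal (Real.log 3) * ENNReal.ofReal δ +
            2 * ∫⁻ x in Set.Ioc (0:ℝ) δ, ENNReal.ofReal (Real.log (Real.log (1 / G x))) := by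
            rw [lintegral_const_mul' 2 _ (by norm_num : (2:ℝ≥0∞) ≠ ⊤), Real.volume_Ioc]
            norm_num
    have htop : (∑' n : ℕ, ENNReal.ofReal (1/((n:ℝ)+2)) * volume (A (n+2))) ≠ ⊤ := by
      apply ne_top_of_le_ne_top _ (hbound.trans hb2)
      apply ENNReal.add_ne_top.2
      constructor
      · exact ENNReal.mul_ne_top ENNReal.ofReal_ne_top ENNReal.ofReal_ne_top
      · exact ENNReal.mul_ne_top (by norm_num) hI.ne
    have hsummx : Summable (fun n : ℕ => 1/((n:ℝ)+2) * (volume (A (n+2))).toReal) := by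
      have h1 := ENNReal.summable_toReal htop
      apply h1.congr
      intro n
      rw [ENNReal.toReal_mul, ENNReal.toReal_ofReal (by positivity)]
    -- Markov: eventual smallness of vol (A k)
    have hvolfin : ∀ k, volume (A k) ≤ ENNReal.ofReal δ := by
      intro k
      have := measure_mono (μ := volume) (hAsub k)
      simpa [Real.volume_Ioc] using this
    have hφcont : ContinuousOn (fun x => Real.log (Real.log (1 / G x))) (Set.Ioc 0 δ) := by
      have c1 : ContinuousOn G (Set.Ioc 0 δ) := hGcont.mono hδIcc
      have c2 : ContinuousOn (fun x => 1 / G x) (Set.Ioc 0 δ) := by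
        simp_rw [one_div]
        exact c1.inv₀ (fun x hx => ne_of_gt (hGpos x ⟨hx.1, by linarith [hx.2]⟩))
      have c3 : ContinuousOn (fun x => Real.log (1 / G x)) (Set.Ioc 0 δ) :=
        c2.log (fun x hx => ne_of_gt (one_div_pos.2 (hGpos x ⟨hx.1, by linarith [hx.2]⟩)))
      exact c3.log (fun x hx => ne_of_gt (hhpos x hx))
    have hφaemeas : AEMeasurable (fun x => ENNReal.ofReal (Real.log (Real.log (1 / G x))))
        (volume.restrict (Set.Ioc 0 δ)) :=
      ENNReal.measurable_ofReal.comp_aemeasurable (hφcont.aemeasurable measurableSet_Ioc)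
    have hmarkov : ∀ k : ℕ, ENNReal.ofReal (Real.log (Real.sqrt k)) * volume (A k)
        ≤ ∫⁻ x in Set.Ioc (0:ℝ) δ, ENNReal.ofReal (Real.log (Real.log (1 / G x))) := by
      intro k
      have h1 : volume (A k) = (volume.restrict (Set.Ioc (0:ℝ) δ)) (A k) := by
        rw [Measure.restrict_apply (hAmeas k)]
        congr 1
        exact (Set.inter_eq_left.2 (hAsub k)).symm
      have h2 : A k ⊆ {x | ENNReal.ofReal (Real.log (Real.sqrt k))
          ≤ ENNReal.ofReal (Real.log (Real.log (1 / G x)))} := by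
        intro x hx
        rcases le_or_gt (Real.sqrt k) 0 with h | h
        · have h0 : Real.sqrt (k:ℝ) = 0 := le_antisymm h (Real.sqrt_nonneg _)
          simp [h0]
        · exact ENNReal.ofReal_le_ofReal (Real.log_le_log h hx.2.le)
      calc ENNReal.ofReal (Real.log (Real.sqrt k)) * volume (A k)
          = ENNReal.ofReal (Real.log (Real.sqrt k)) * (volume.restrict (Set.Ioc (0:ℝ) δ)) (A k) := by
            rw [h1]
        _ ≤ ENNReal.ofReal (Real.log (Real.sqrt k)) *
            (volume.restrict (Set.Ioc (0:ℝ) δ)) {x | ENNReal.ofReal (Real.log (Real.sqrt k))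
              ≤ ENNReal.ofReal (Real.log (Real.log (1 / G x)))} :=
            mul_le_mul_right (measure_mono h2) _
        _ ≤ _ := mul_meas_ge_le_lintegral₀ hφaemeas _
    have hsmall : ∀ᶠ k : ℕ in atTop, volume (A k) < ENNReal.ofReal (δ/2) := by
      set I := ∫⁻ x in Set.Ioc (0:ℝ) δ, ENNReal.ofReal (Real.log (Real.log (1 / G x))) with hIdef
      have hlogs : Tendsto (fun k : ℕ => Real.log (Real.sqrt k)) atTop atTop := by
        apply Real.tendsto_log_atTop.comp
        have h1 : Tendsto (fun x : ℝ => x ^ (1/2 : ℝ)) atTop atTop := tendsto_rpow_atTop (by norm_num)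
        have h2 := h1.comp (tendsto_natCast_atTop_atTop (R := ℝ))
        apply h2.congr
        intro n; simp [Real.sqrt_eq_rpow]
      have hev : ∀ᶠ k : ℕ in atTop, I.toReal + 1 < Real.log (Real.sqrt k) * (δ/2) :=
        (hlogs.atTop_mul_const (by linarith)).eventually_gt_atTop _
      have hev2 : ∀ᶠ k : ℕ in atTop, (0:ℝ) ≤ Real.log (Real.sqrt k) :=
        hlogs.eventually_ge_atTop 0
      filter_upwards [hev, hev2] with k hk hk2
      by_contra hcon
      push_neg at hcon
      have h3 : ENNReal.ofReal (Real.log (Real.sqrt k) * (δ/2))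
          ≤ ENNReal.ofReal (Real.log (Real.sqrt k)) * volume (A k) := by
        rw [ENNReal.ofReal_mul hk2]
        exact mul_le_mul_right hcon _
      have h4 := h3.trans (hmarkov k)
      rw [ENNReal.ofReal_le_iff_le_toReal hI.ne] at h4
      linarith
    -- lower bound for the moments
    have hlow : ∀ n : ℕ, ∀ y ∈ Set.Ioc (0:ℝ) δ,
        2*(y * (G y * (1-2*y)^(2*n+1))) ≤ 2 * ∫ r in Set.Ioo (0:ℝ) 1, G (1 - r) * r ^ (2*n+1) := by
      intro n y hy
      have hy18 : y ≤ 1/8 := hy.2.trans hδ18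
      have hsub : Set.Ioc (1-2*y) (1-y) ⊆ Set.Ioo (0:ℝ) 1 := by
        intro r hr
        exact ⟨by linarith [hr.1, hy18], by linarith [hr.2, hy.1]⟩
      have hGy : 0 < G y := hGpos y ⟨hy.1, by linarith⟩
      have hint2 : IntegrableOn (fun r : ℝ => G (1 - r) * r ^ (2*n+1)) (Set.Ioc (1-2*y) (1-y)) :=
        (hInt _).mono_set hsub
      have step2 : ∫ _ in Set.Ioc (1-2*y) (1-y), (G y * (1-2*y)^(2*n+1))
          ≤ ∫ r in Set.Ioc (1-2*y) (1-y), G (1 - r) * r ^ (2*n+1) := by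
        apply setIntegral_mono_on (integrableOn_const (by
          rw [Real.volume_Ioc]; exact ENNReal.ofReal_ne_top)) hint2 measurableSet_Ioc
        intro r hr
        have h1r : 1 - r ∈ Set.Icc (0:ℝ) 1 := ⟨by linarith [hr.2, hy.1], by linarith [hr.1, hy18]⟩
        have hGmono' : G y ≤ G (1 - r) := hGmono ⟨hy.1.le, by linarith⟩ h1r (by linarith [hr.2])
        have hr0 : (0:ℝ) ≤ 1 - 2*y := by linarith
        have hpow : (1-2*y)^(2*n+1) ≤ r^(2*n+1) := pow_le_pow_left₀ hr0 hr.1.le _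
        have hG1r : 0 < G (1 - r) := hGpos _ ⟨by linarith [hr.2, hy.1], by linarith [hr.1, hy18]⟩
        exact mul_le_mul hGmono' hpow (pow_nonneg hr0 _) hG1r.le
      have hconst : ∫ _ in Set.Ioc (1-2*y) (1-y), (G y * (1-2*y)^(2*n+1))
          = y * (G y * (1-2*y)^(2*n+1)) := by
        rw [setIntegral_const, Real.volume_real_Ioc,
          show (1-y) - (1-2*y) = y by ring, max_eq_left hy.1.le, smul_eq_mul]
      have step1 : ∫ r in Set.Ioc (1-2*y) (1-y), G (1 - r) * r ^ (2*n+1)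
          ≤ ∫ r in Set.Ioo (0:ℝ) 1, G (1 - r) * r ^ (2*n+1) := by
        apply setIntegral_mono_set (hInt _)
          (ae_restrict_of_forall_mem measurableSet_Ioo (fun r hr =>
            mul_nonneg (hGpos _ ⟨by linarith [hr.2], by linarith [hr.1]⟩).le
              (pow_nonneg hr.1.le _)))
          (HasSubset.Subset.eventuallyLE hsub)
      rw [hconst] at step2
      linarith
    -- the eventual estimate
    have hev3 : ∀ᶠ n : ℕ in atTop, 1/(n:ℝ) ≤ δ/2 := by
      have h1 : Tendsto (fun n : ℕ => 1/(n:ℝ)) atTop (𝓝 0) := tendsto_one_div_atTop_nhds_zero_nat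
      exact h1.eventually_le_const (by linarith)
    have hev_est : ∀ᶠ n : ℕ in atTop,
        Real.log (1 / (2 * ∫ r in Set.Ioo (0:ℝ) 1, G (1 - r) * r ^ (2*n+1)))
          ≤ Real.sqrt n + Real.log n + (12 * n * (volume (A n)).toReal + 12) := by
      filter_upwards [hsmall, hev3, eventually_ge_atTop 1] with n hs h3 hn1
      have hn1' : (1:ℝ) ≤ (n:ℝ) := by exact_mod_cast hn1
      have hn0 : (0:ℝ) < (n:ℝ) := by linarith
      set xv : ℝ := (volume (A n)).toReal with hxv
      have hx0 : 0 ≤ xv := ENNReal.toReal_nonneg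
      have hxle : xv ≤ δ/2 := ENNReal.toReal_le_of_le_ofReal (by linarith) hs.le
      set y : ℝ := xv + 1/(n:ℝ) with hydef
      have hy : y ∈ Set.Ioc (0:ℝ) δ := ⟨by positivity, by rw [hydef]; linarith⟩
      have hynot : y ∉ A n :=
        aux_not_mem (hAsub n) (hAdc n) hy (by rw [hydef]; exact lt_add_of_pos_right xv (by positivity))
      have hhy : Real.log (1/G y) ≤ Real.sqrt n := by
        by_contra hcon
        push_neg at hcon
        exact hynot ⟨hy, hcon⟩
      have hGy : 0 < G y := hGpos y ⟨hy.1, by linarith [hy.2, hδ18]⟩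
      have hp : (0:ℝ) < 1 - 2*y := by linarith [hy.2, hδ18]
      have hlowpos : (0:ℝ) < 2*(y * (G y * (1-2*y)^(2*n+1))) := by positivity
      have l1 : Real.log (1 / (2 * ∫ r in Set.Ioo (0:ℝ) 1, G (1 - r) * r ^ (2*n+1)))
          ≤ Real.log (1/(2*(y * (G y * (1-2*y)^(2*n+1))))) := by
        exact Real.log_le_log (one_div_pos.2 (hMpos n))
          (one_div_le_one_div_of_le hlowpos (hlow n y hy))
      have l2 : Real.log (1/(2*(y * (G y * (1-2*y)^(2*n+1)))))
          = -(Real.log 2 + (Real.log y + (Real.log (G y)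
              + ((2*n+1:ℕ):ℝ)*Real.log (1-2*y)))) := by
        rw [one_div, Real.log_inv, Real.log_mul (two_ne_zero) (by positivity),
          Real.log_mul (ne_of_gt hy.1) (by positivity),
          Real.log_mul (ne_of_gt hGy) (by positivity), Real.log_pow]
      have b1 : -Real.log (G y) ≤ Real.sqrt n := by
        rw [one_div, Real.log_inv] at hhy
        exact hhy
      have b2 : -Real.log y ≤ Real.log n := by
        have h4 : 1/(n:ℝ) ≤ y := by rw [hydef]; linarith
        have h5 : Real.log (1/(n:ℝ)) ≤ Real.log y := Real.log_le_log (by positivity) h4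
        rw [one_div, Real.log_inv] at h5
        linarith
      have b3 : ((2*n+1:ℕ):ℝ)*(-Real.log (1-2*y)) ≤ 12 * n * xv + 12 := by
        have h6 : -Real.log (1-2*y) ≤ 2*(2*y) := aux_neg_log_one_sub (by positivity) (by linarith)
        have h8 : ((2*n+1:ℕ):ℝ)*(-Real.log (1-2*y)) ≤ ((2*n+1:ℕ):ℝ)*(4*y) := by
          apply mul_le_mul_of_nonneg_left (by linarith) (by positivity)
        have hny : (n:ℝ) * (1/(n:ℝ)) = 1 := mul_one_div_cancel (ne_of_gt hn0)
        have h9 : ((2*n+1:ℕ):ℝ)*(4*y) ≤ 12*n*xv + 12 := by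
          rw [hydef]
          push_cast
          nlinarith [hx0, hn1', hny, mul_nonneg hx0 (by linarith : (0:ℝ) ≤ (n:ℝ) - 1)]
        linarith
      have hlog2 : 0 ≤ Real.log 2 := Real.log_nonneg (by norm_num)
      rw [l2] at l1
      linarith
    have hevpos : ∀ᶠ n : ℕ in atTop,
        0 ≤ Real.log (1 / (2 * ∫ r in Set.Ioo (0:ℝ) 1, G (1 - r) * r ^ (2*n+1))) := by
      filter_upwards [hMtend.eventually_lt_const (by norm_num : (0:ℝ) < 1)] with n hn
      exact Real.log_nonneg (one_le_one_div (hMpos n) hn.le)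
    obtain ⟨N', hN'⟩ := eventually_atTop.1 (hev_est.and hevpos)
    rw [← summable_nat_add_iff (N' + 2)]
    set K := N' + 2 with hKdef
    have hK2 : 2 ≤ K := by omega
    -- summable majorant
    have hs1 : Summable (fun b : ℕ => 15 * ((((b+K:ℕ)):ℝ) ^ ((3:ℝ)/2))⁻¹) := by
      have h1 : Summable (fun n : ℕ => (((n:ℝ)) ^ ((3:ℝ)/2))⁻¹) :=
        Real.summable_nat_rpow_inv.2 (by norm_num)
      exact ((summable_nat_add_iff K).2 h1).mul_left 15
    have hs2 : Summable (fun b : ℕ => 12 * ((volume (A (b+K))).toReal / (((b+K:ℕ)):ℝ))) := by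
      have h1 := (summable_nat_add_iff
        (f := fun n : ℕ => 1/((n:ℝ)+2) * (volume (A (n+2))).toReal) (K-2)).2 hsummx
      have h2 : ∀ b : ℕ, 1/((((b+(K-2):ℕ)):ℝ) + 2) * (volume (A ((b+(K-2))+2))).toReal
          = (volume (A (b+K))).toReal / (((b+K:ℕ)):ℝ) := by
        intro b
        have hk2 : b + (K-2) + 2 = b + K := by omega
        calc 1/((((b+(K-2):ℕ)):ℝ) + 2) * (volume (A ((b+(K-2))+2))).toReal
            = 1/((((b+(K-2)+2:ℕ))):ℝ) * (volume (A ((b+(K-2))+2))).toReal := by norm_cast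
          _ = 1/((((b+K:ℕ))):ℝ) * (volume (A (b+K))).toReal := by rw [hk2]
          _ = (volume (A (b+K))).toReal / (((b+K:ℕ)):ℝ) := one_div_mul_eq_div _ _
      exact ((h1.congr h2).mul_left 12)
    apply Summable.of_nonneg_of_le (g := fun b : ℕ =>
        Real.log (1 / (2 * ∫ r in Set.Ioo (0:ℝ) 1, G (1 - r) * r ^ (2*(b+K)+1))) / (1 + ((b+K:ℕ):ℝ)^2))
      ?_ ?_ (hs1.add hs2)
    · intro b
      exact div_nonneg (hN' (b+K) (by omega)).2 (by positivity)
    · intro b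
      have hm1 : (1:ℝ) ≤ ((b+K:ℕ):ℝ) := by exact_mod_cast Nat.one_le_iff_ne_zero.2 (by omega)
      have hm0 : (0:ℝ) < ((b+K:ℕ):ℝ) := by linarith
      set m : ℝ := ((b+K:ℕ):ℝ) with hm
      set xv : ℝ := (volume (A (b+K))).toReal with hxv
      have hx0 : 0 ≤ xv := ENNReal.toReal_nonneg
      have hsq1 : (1:ℝ) ≤ Real.sqrt m := Real.one_le_sqrt.2 hm1
      have hsq0 : (0:ℝ) < Real.sqrt m := by linarith
      have est := (hN' (b+K) (by omega)).1
      have hlogm : Real.log m ≤ 2*Real.sqrt m := by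
        have h1 : Real.log m = Real.log ((Real.sqrt m)^2) := by rw [Real.sq_sqrt hm0.le]
        have h2 : Real.log (Real.sqrt m) ≤ Real.sqrt m - 1 :=
          Real.log_le_sub_one_of_pos hsq0
        rw [h1, Real.log_pow]
        push_cast
        linarith
      have hnum : Real.sqrt m + Real.log m + (12 * m * xv + 12)
          ≤ 15*Real.sqrt m + 12*m*xv := by linarith
      have hden : (0:ℝ) < 1 + m^2 := by positivity
      calc Real.log (1 / (2 * ∫ r in Set.Ioo (0:ℝ) 1, G (1 - r) * r ^ (2*(b+K)+1))) / (1 + m^2)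
          ≤ (15*Real.sqrt m + 12*m*xv) / (1 + m^2) := by
            gcongr
            exact le_trans est hnum
        _ = 15*Real.sqrt m/(1 + m^2) + 12*m*xv/(1 + m^2) := add_div _ _ _
        _ ≤ 15 * (m ^ ((3:ℝ)/2))⁻¹ + 12 * (xv/m) := by
            apply add_le_add
            · have t1 : 15*Real.sqrt m/(1 + m^2) ≤ 15*Real.sqrt m/m^2 :=
                div_le_div₀ (by positivity) le_rfl (by positivity) (by linarith)
              have t2 : 15*Real.sqrt m/m^2 = 15 * (m ^ ((3:ℝ)/2))⁻¹ := by
                rw [Real.sqrt_eq_rpow,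
                  show ((m:ℝ)^(2:ℕ)) = m ^ ((2:ℕ):ℝ) from (Real.rpow_natCast _ 2).symm,
                  mul_div_assoc, ← Real.rpow_sub hm0,
                  show ((1:ℝ)/2 - ((2:ℕ):ℝ)) = -((3:ℝ)/2) by norm_num, Real.rpow_neg hm0.le]
              linarith
            · have t3 : 12*m*xv/(1 + m^2) ≤ 12*m*xv/m^2 :=
                div_le_div₀ (by positivity) le_rfl (by positivity) (by linarith)
              have t4 : 12*m*xv/m^2 = 12*(xv/m) := by
                field_simp
              linarith
  
  -- ## conclusion
  refine ⟨?_, ?_, ?_, ?_, ?_, ?_⟩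
  · intro n
    exact hMpos n
  · intro m n hmn
    have := hJmono m n hmn
    simpa using by linarith
  · exact hMtend
  · exact ⟨0, fun n _ => hconvex n⟩
  · obtain ⟨e, he0, hev⟩ := hdecay
    obtain ⟨N, hN⟩ := eventually_atTop.1 hev
    exact ⟨e, he0, N, fun n hn => hN n hn⟩
  · exact hSummable
end
end

section
/- Let f(z) = ∑_{n≥0} f_n zⁿ be an analytic function on 𝔻 with rapid spectral decay: sup_{n≥0} |f_n|·exp(c√n) < ∞ for some c > 0. Then there exists c′ > 0 such that ∑_{n≥0} |f_n|²/M_n < ∞, where M_n = ∫_𝔻 exp(−c′/(1−|z|))·|z|^{2n} dA(z) are the moments of the radial weight exp(−c′/(1−|z|)) on 𝔻. -/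
open MeasureTheory Set Filter Metric Complex
open scoped Real ENNReal Topology

noncomputable section

/-- Normalized area measure on the unit disk (so that A(𝔻) = 1). -/
def mA : Measure ℂ := (ENNReal.ofReal Real.pi)⁻¹ • (volume.restrict (Metric.ball (0:ℂ) 1))

lemma aux_integrable (c' : ℝ) (hc' : 0 < c') (n : ℕ) :
    Integrable (fun z : ℂ => Real.exp (-c' / (1 - ‖z‖)) * ‖z‖ ^ (2*n)) mA := by
  have hmeas : Measurable (fun z : ℂ => Real.exp (-c' / (1 - ‖z‖)) * ‖z‖ ^ (2*n)) := by
    exact (Real.measurable_exp.comp (measurable_const.div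
      (measurable_const.sub continuous_norm.measurable))).mul
      (continuous_norm.measurable.pow_const _)
  rw [mA, integrable_smul_measure (by simp) (by simp [Real.pi_pos])]
  apply Measure.integrableOn_of_bounded (M := 1) (by simp)
    hmeas.aestronglyMeasurable
  rw [ae_restrict_iff' measurableSet_ball]
  filter_upwards with z hz
  rw [mem_ball_zero_iff] at hz
  have h1 : Real.exp (-c' / (1 - ‖z‖)) ≤ 1 := by
    rw [Real.exp_le_one_iff]
    apply div_nonpos_of_nonpos_of_nonneg (by linarith) (by linarith)
  have h2 : ‖z‖ ^ (2*n) ≤ 1 :=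
    pow_le_one₀ (norm_nonneg z) hz.le
  have h0 : (0:ℝ) ≤ Real.exp (-c' / (1 - ‖z‖)) * ‖z‖ ^ (2*n) := by positivity
  rw [Real.norm_eq_abs, _root_.abs_of_nonneg h0]
  calc Real.exp (-c' / (1 - ‖z‖)) * ‖z‖ ^ (2*n)
      ≤ 1 * 1 := mul_le_mul h1 h2 (by positivity) (by linarith)
    _ = 1 := by ring

lemma mA_annulus (r1 r2 : ℝ) (h0 : 0 ≤ r1) (h12 : r1 ≤ r2) (h21 : r2 < 1) :
    mA (Metric.closedBall (0:ℂ) r2 \ Metric.ball (0:ℂ) r1)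
      = ENNReal.ofReal (r2^2 - r1^2) := by
  have hsub : Metric.ball (0:ℂ) r1 ⊆ Metric.closedBall (0:ℂ) r2 :=
    (Metric.ball_subset_ball h12).trans Metric.ball_subset_closedBall
  have hS1 : Metric.closedBall (0:ℂ) r2 \ Metric.ball (0:ℂ) r1 ⊆ Metric.ball (0:ℂ) 1 :=
    fun z hz => lt_of_le_of_lt (Metric.mem_closedBall.mp hz.1) h21
  have hmeasS : MeasurableSet (Metric.closedBall (0:ℂ) r2 \ Metric.ball (0:ℂ) r1) :=
    measurableSet_closedBall.diff measurableSet_ball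
  have hvol : volume (Metric.closedBall (0:ℂ) r2 \ Metric.ball (0:ℂ) r1)
      = ENNReal.ofReal (r2^2 - r1^2) * NNReal.pi := by
    rw [measure_diff hsub measurableSet_ball.nullMeasurableSet measure_ball_lt_top.ne,
      Complex.volume_closedBall, Complex.volume_ball]
    rw [← ENNReal.sub_mul (by intro _ _; simp)]
    congr 1
    rw [← ENNReal.ofReal_pow h0, ← ENNReal.ofReal_pow (h0.trans h12),
      ← ENNReal.ofReal_sub _ (by positivity)]
  rw [mA, Measure.smul_apply, Measure.restrict_apply hmeasS,
    Set.inter_eq_self_of_subset_left hS1, hvol, smul_eq_mul,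
    ← NNReal.coe_real_pi, ENNReal.ofReal_coe_nnreal]
  rw [mul_comm (ENNReal.ofReal _), ← mul_assoc, ENNReal.inv_mul_cancel (by
      simp [← NNReal.coe_real_pi]
      exact_mod_cast NNReal.pi_ne_zero) (by simp), one_mul]

lemma aux_lb (c' : ℝ) (hc' : 0 < c') (r1 r2 : ℝ) (h0 : 0 ≤ r1) (h12 : r1 ≤ r2) (h21 : r2 < 1)
    (n : ℕ) :
    Real.exp (-c' / (1 - r2)) * r1 ^ (2*n) * (r2^2 - r1^2) ≤
      ∫ z, Real.exp (-c' / (1 - ‖z‖)) * ‖z‖ ^ (2*n) ∂mA := by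
  set S := Metric.closedBall (0:ℂ) r2 \ Metric.ball (0:ℂ) r1 with hS
  have hmeasS : MeasurableSet S := measurableSet_closedBall.diff measurableSet_ball
  have hμS : mA S = ENNReal.ofReal (r2^2 - r1^2) := mA_annulus r1 r2 h0 h12 h21
  have hpt : ∀ z ∈ S, Real.exp (-c' / (1 - r2)) * r1 ^ (2*n)
      ≤ Real.exp (-c' / (1 - ‖z‖)) * ‖z‖ ^ (2*n) := by
    intro z hz
    have hz2 : ‖z‖ ≤ r2 := by
      have := hz.1; rwa [Metric.mem_closedBall, Complex.dist_eq, sub_zero] at this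
    have hz1 : r1 ≤ ‖z‖ := by
      have := hz.2
      rw [Metric.mem_ball, Complex.dist_eq, sub_zero, not_lt] at this
      exact this
    have hexp : Real.exp (-c' / (1 - r2)) ≤ Real.exp (-c' / (1 - ‖z‖)) := by
      apply Real.exp_le_exp.mpr
      rw [neg_div, neg_div, neg_le_neg_iff]
      apply div_le_div_of_nonneg_left hc'.le (by linarith) (by linarith)
    exact mul_le_mul hexp (pow_le_pow_left₀ h0 hz1 _) (by positivity) (Real.exp_pos _).le
  have hint := aux_integrable c' hc' n
  have key := setIntegral_ge_of_const_le (μ := mA) hmeasS (by rw [hμS]; exact ENNReal.ofReal_ne_top)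
    hpt hint.integrableOn
  have h2 : ∫ z in S, Real.exp (-c' / (1 - ‖z‖)) * ‖z‖ ^ (2*n) ∂mA
      ≤ ∫ z, Real.exp (-c' / (1 - ‖z‖)) * ‖z‖ ^ (2*n) ∂mA :=
    setIntegral_le_integral hint (Eventually.of_forall (fun z => by positivity))
  have hr : (mA S).toReal = r2^2 - r1^2 := by
    rw [hμS, ENNReal.toReal_ofReal (by nlinarith)]
  calc Real.exp (-c' / (1 - r2)) * r1 ^ (2*n) * (r2^2 - r1^2)
      = Real.exp (-c' / (1 - r2)) * r1 ^ (2*n) * (mA S).toReal := by rw [hr]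
    _ ≤ _ := by have := key.trans h2; rw [smul_eq_mul, mul_comm] at this; exact this

lemma exp_neg_two_le {x : ℝ} (h0 : 0 ≤ x) (h2 : x ≤ 1/2) : Real.exp (-(2*x)) ≤ 1 - x := by
  have h1 : 1 + 2*x ≤ Real.exp (2*x) := by
    have := Real.add_one_le_exp (2*x); linarith
  have hpos : (0:ℝ) < 1 + 2*x := by linarith
  rw [Real.exp_neg]
  calc (Real.exp (2*x))⁻¹ ≤ (1 + 2*x)⁻¹ := by
        apply inv_anti₀ hpos h1
    _ ≤ 1 - x := by
        rw [inv_le_iff_one_le_mul₀ hpos]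
        nlinarith
  
lemma pow6_le_exp {x : ℝ} (hx : 0 ≤ x) : x^6/720 ≤ Real.exp x := by
  have h := Real.sum_le_exp_of_nonneg hx 7
  have h6 : x^6/720 ≤ ∑ i ∈ Finset.range 7, x ^ i / (Nat.factorial i) := by
    have : x^6/720 = x^6 / (Nat.factorial 6) := by norm_num [Nat.factorial]
    rw [this]
    exact Finset.single_le_sum (f := fun i => x ^ i / (Nat.factorial i))
      (fun i _ => by positivity) (by norm_num)
  exact h6.trans h

/-- **Functions of rapid spectral decay lie in a space H₂*(M).** If the coefficients
of f satisfy |fₙ| = O(exp(-c√n)), then there is c′ > 0 such that ∑ |fₙ|²/Mₙ < ∞,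
where Mₙ are the moments of the radial weight exp(-c′/(1-|z|)). -/
theorem rapid_spectral_decay_mem_H2star
    (f : ℕ → ℂ)
    (hRSD : ∃ c > (0:ℝ), ∃ C : ℝ, ∀ n : ℕ, ‖f n‖ * Real.exp (c * Real.sqrt n) ≤ C) :
    ∃ c' > (0:ℝ),
      Summable (fun n : ℕ =>
        ‖f n‖ ^ 2 /
          ∫ z, Real.exp (-c' / (1 - ‖z‖)) * ‖z‖ ^ (2 * n) ∂mA) := by
  obtain ⟨c, hc, C, hC⟩ := hRSD
  set ε : ℝ := min (c/8) (1/8) with hεdef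
  have hε : 0 < ε := lt_min (by positivity) (by norm_num)
  have hε8 : ε ≤ 1/8 := min_le_right _ _
  have hεc : ε ≤ c/8 := min_le_left _ _
  refine ⟨ε*c/4, by positivity, ?_⟩
  rw [← summable_nat_add_iff 1]
  have hsum : Summable (fun n : ℕ => (2*C^2/ε) * (720/c^6) * (1/((n:ℝ)+1)^2)) := by
    have h2 : Summable (fun n : ℕ => 1/((n:ℝ)+1)^2) := by
      have := (summable_nat_add_iff 1).mpr
        (Real.summable_one_div_nat_pow.mpr (by norm_num : 1 < 2))
      exact this.congr fun n => by push_cast; ring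
    exact h2.mul_left _
  apply Summable.of_nonneg_of_le _ _ hsum
  · intro n
    apply div_nonneg (by positivity)
    exact integral_nonneg fun z => by positivity
  intro n
  set m : ℕ := n + 1 with hmdef
  have hm1 : 1 ≤ m := Nat.le_add_left 1 n
  set s : ℝ := Real.sqrt m with hsdef
  have hs1 : 1 ≤ s := by
    rw [hsdef, show (1:ℝ) = Real.sqrt 1 from Real.sqrt_one.symm]
    exact Real.sqrt_le_sqrt (by exact_mod_cast hm1)
  have hs0 : 0 < s := lt_of_lt_of_le one_pos hs1
  have hs2 : s^2 = (m:ℝ) := Real.sq_sqrt (by positivity)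
  have hsm : s ≤ (m:ℝ) := by nlinarith
  set r1 : ℝ := 1 - ε/s with hr1def
  set r2 : ℝ := 1 - ε/(2*s) with hr2def
  have hus : ε/s ≤ 1/8 := (div_le_self hε.le hs1).trans hε8
  have hus0 : 0 < ε/s := by positivity
  have h0 : 0 ≤ r1 := by rw [hr1def]; linarith
  have h12 : r1 ≤ r2 := by
    rw [hr1def, hr2def]
    have : ε/(2*s) ≤ ε/s := by
      apply div_le_div_of_nonneg_left hε.le hs0 (by linarith)
    linarith
  have h21 : r2 < 1 := by
    have h : 0 < ε/(2*s) := by positivity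
    rw [hr2def]; linarith
  have hlb := aux_lb (ε*c/4) (by positivity) r1 r2 h0 h12 h21 m
  -- bound the exponential factor
  have harg : -(ε*c/4) / (1 - r2) = -(c/2)*s := by
    rw [hr2def]
    field_simp [hε.ne']
    ring
  have hA : Real.exp (-(c/2)*s) = Real.exp (-(ε*c/4) / (1 - r2)) := by rw [harg]
  -- bound r1^(2m)
  have hB : Real.exp (-(c/2)*s) ≤ r1 ^ (2*m) := by
    have h1x : Real.exp (-(2*(ε/s))) ≤ r1 := exp_neg_two_le hus0.le (by linarith)
    have e1 : Real.exp (-(2*(ε/s))) ^ (2*m) = Real.exp (((2*m : ℕ):ℝ) * (-(2*(ε/s)))) :=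
      (Real.exp_nat_mul _ _).symm
    have e2 : ((2*m : ℕ):ℝ) * (-(2*(ε/s))) = -(4*ε*s) := by
      have hcast : ((2*m : ℕ):ℝ) = 2 * s^2 := by rw [hs2]; push_cast; ring
      rw [hcast]
      field_simp
      ring
    have e3 : -(c/2)*s ≤ -(4*ε*s) := by nlinarith
    calc Real.exp (-(c/2)*s) ≤ Real.exp (-(4*ε*s)) := Real.exp_le_exp.mpr e3
      _ = Real.exp (-(2*(ε/s))) ^ (2*m) := by rw [e1, e2]
      _ ≤ r1 ^ (2*m) := pow_le_pow_left₀ (Real.exp_pos _).le h1x _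
  -- bound the area factor
  have hC2 : ε/(2*s) ≤ r2^2 - r1^2 := by
    rw [hr1def, hr2def]
    have heq : ε/(2*s) = (ε/s)/2 := by ring
    rw [heq]
    set u : ℝ := ε/s
    nlinarith
  -- denominator lower bound
  set M : ℝ := ∫ z, Real.exp (-(ε*c/4) / (1 - ‖z‖)) * ‖z‖ ^ (2 * m) ∂mA
    with hMdef
  have hM : Real.exp (-(c*s)) * (ε/(2*s)) ≤ M := by
    calc Real.exp (-(c*s)) * (ε/(2*s))
        = (Real.exp (-(c/2)*s) * Real.exp (-(c/2)*s)) * (ε/(2*s)) := by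
          rw [← Real.exp_add]; ring_nf
      _ ≤ (Real.exp (-(ε*c/4) / (1 - r2)) * r1 ^ (2*m)) * (r2^2 - r1^2) := by
          apply mul_le_mul _ hC2 (by positivity) (by positivity)
          exact mul_le_mul (le_of_eq hA) hB (Real.exp_pos _).le (Real.exp_pos _).le
      _ ≤ M := hlb
  have hMpos : 0 < M := lt_of_lt_of_le (by positivity) hM
  -- numerator upper bound
  have hnum : ‖f m‖^2 ≤ (C / Real.exp (c*s))^2 := by
    apply pow_le_pow_left₀ (norm_nonneg _)
    rw [le_div_iff₀ (Real.exp_pos _)]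
    exact hC m
  -- combine
  have step1 : ‖f m‖^2 / M ≤ (C / Real.exp (c*s))^2 / (Real.exp (-(c*s)) * (ε/(2*s))) :=
    div_le_div₀ (by positivity) hnum (by positivity) hM
  have step2 : (C / Real.exp (c*s))^2 / (Real.exp (-(c*s)) * (ε/(2*s)))
      = (2*C^2/ε) * (s * (Real.exp (c*s))⁻¹) := by
    rw [Real.exp_neg]
    have hEpos : (0:ℝ) < Real.exp (c*s) := Real.exp_pos _
    field_simp
  have step3 : s * (Real.exp (c*s))⁻¹ ≤ (720/c^6) * (1/(m:ℝ)^2) := by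
    have hp : c^6 * (m:ℝ)^3 / 720 ≤ Real.exp (c*s) := by
      have := pow6_le_exp (x := c*s) (by positivity)
      calc c^6 * (m:ℝ)^3 / 720 = (c*s)^6/720 := by rw [← hs2]; ring
        _ ≤ _ := this
    have hppos : (0:ℝ) < c^6 * (m:ℝ)^3 / 720 := by
      have hmpos : (0:ℝ) < (m:ℝ) := by exact_mod_cast hm1
      positivity
    have hinv : (Real.exp (c*s))⁻¹ ≤ (c^6 * (m:ℝ)^3 / 720)⁻¹ := inv_anti₀ hppos hp
    have hmpos : (0:ℝ) < (m:ℝ) := by exact_mod_cast hm1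
    calc s * (Real.exp (c*s))⁻¹ ≤ (m:ℝ) * (c^6 * (m:ℝ)^3 / 720)⁻¹ :=
          mul_le_mul hsm hinv (by positivity) (by positivity)
      _ = (720/c^6) * (1/(m:ℝ)^2) := by field_simp
  calc ‖f m‖^2 / M ≤ (2*C^2/ε) * (s * (Real.exp (c*s))⁻¹) := by rw [← step2]; exact step1
    _ ≤ (2*C^2/ε) * ((720/c^6) * (1/(m:ℝ)^2)) :=
        mul_le_mul_of_nonneg_left step3 (by positivity)
    _ = (2*C^2/ε) * (720/c^6) * (1/((n:ℝ)+1)^2) := by rw [hmdef]; push_cast; ring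
end
end

section
/- Let f(z) = ∑_{n≥0} f_n zⁿ be an analytic function on 𝔻 with rapid spectral decay: sup_{n≥0} |f_n|·exp(c√n) < ∞ for some c > 0. Let h be a bounded analytic function on 𝔻 with Taylor coefficients (h_k)_{k≥0}. Then for every n ≥ 0 the series g_n = ∑_{k≥0} conj(h_k)·f_{n+k} converges absolutely, and the function g(z) = ∑_{n≥0} g_n zⁿ (which equals the co-analytic Toeplitz image T_{h̄} f = P₊(h̄·f)) again has rapid spectral decay: there exists c′ > 0 with sup_{n≥0} |g_n|·exp(c′√n) < ∞. -/
open MeasureTheory Set Filter Metric Complex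
open scoped Real ENNReal Topology

noncomputable section

/-- Taylor coefficient at the origin of an analytic function on 𝔻. -/
def taylorCoeff (h : ℂ → ℂ) (n : ℕ) : ℂ := iteratedDeriv n h 0 / (n.factorial : ℂ)

private lemma tendsto_sqrt_atTop' : Tendsto Real.sqrt atTop atTop := by
  rw [tendsto_atTop_atTop]
  intro b
  refine ⟨b ^ 2, fun a ha => ?_⟩
  calc b ≤ |b| := le_abs_self b
  _ = Real.sqrt (b ^ 2) := (Real.sqrt_sq_eq_abs b).symm
  _ ≤ Real.sqrt a := Real.sqrt_le_sqrt ha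

private lemma summable_exp_neg_sqrt {a : ℝ} (ha : 0 < a) :
    Summable (fun k : ℕ => Real.exp (-(a * Real.sqrt k))) := by
  have hx : Tendsto (fun k : ℕ => a * Real.sqrt k) atTop atTop :=
    (tendsto_sqrt_atTop'.comp tendsto_natCast_atTop_atTop).const_mul_atTop ha
  have h0 : Tendsto (fun k : ℕ =>
      (a * Real.sqrt k) ^ 4 * Real.exp (-(a * Real.sqrt k))) atTop (𝓝 0) :=
    (Real.tendsto_pow_mul_exp_neg_atTop_nhds_zero 4).comp hx
  have h0' : Tendsto (fun k : ℕ =>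
      (k : ℝ) ^ 2 * Real.exp (-(a * Real.sqrt k))) atTop (𝓝 0) := by
    have := h0.const_mul (a ^ 4)⁻¹
    rw [mul_zero] at this
    refine this.congr (fun k => ?_)
    have hk : Real.sqrt k ^ 2 = (k : ℝ) := Real.sq_sqrt (Nat.cast_nonneg k)
    have : (a * Real.sqrt k) ^ 4 = a ^ 4 * (k : ℝ) ^ 2 := by
      rw [mul_pow]
      congr 1
      rw [show (4 : ℕ) = 2 * 2 by norm_num, pow_mul, hk]
    rw [this]
    rw [show a ^ 4 * (k:ℝ) ^ 2 * Real.exp (-(a * Real.sqrt k)) =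
      a ^ 4 * ((k:ℝ) ^ 2 * Real.exp (-(a * Real.sqrt k))) from by ring,
      inv_mul_cancel_left₀ (by positivity : (a:ℝ) ^ 4 ≠ 0)]
  have hev : ∀ᶠ k : ℕ in atTop,
      (k : ℝ) ^ 2 * Real.exp (-(a * Real.sqrt k)) < 1 :=
    h0'.eventually (gt_mem_nhds one_pos)
  refine summable_of_isBigO_nat
    ((Real.summable_one_div_nat_pow (p := 2)).mpr one_lt_two) ?_
  rw [Asymptotics.isBigO_iff]
  refine ⟨1, ?_⟩
  filter_upwards [hev, eventually_ge_atTop 1] with k hk hk1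
  have hkpos : (0 : ℝ) < (k : ℝ) ^ 2 := by positivity
  rw [Real.norm_eq_abs, _root_.abs_of_nonneg (Real.exp_nonneg _), Real.norm_eq_abs,
    _root_.abs_of_nonneg (by positivity : (0:ℝ) ≤ 1 / (k:ℝ) ^ 2), one_mul]
  rw [le_div_iff₀ hkpos, mul_comm]
  exact hk.le

private lemma sqrt_add_le (n k : ℕ) :
    Real.sqrt n + Real.sqrt k ≤ 2 * Real.sqrt (n + k) := by
  have h1 : Real.sqrt n ≤ Real.sqrt (n + k) :=
    Real.sqrt_le_sqrt (by exact_mod_cast Nat.le_add_right n k)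
  have h2 : Real.sqrt k ≤ Real.sqrt (n + k) :=
    Real.sqrt_le_sqrt (by exact_mod_cast Nat.le_add_left k n)
  linarith

/-- Cauchy estimate: Taylor coefficients of a bounded analytic function on the unit
disk are bounded by the sup norm bound. -/
private lemma taylorCoeff_le_bound {h : ℂ → ℂ}
    (h_an : DifferentiableOn ℂ h (Metric.ball 0 1)) {M : ℝ}
    (hM : ∀ z ∈ Metric.ball (0:ℂ) 1, ‖h z‖ ≤ M) (k : ℕ) :
    ‖taylorCoeff h k‖ ≤ M := by
  have key : ∀ r : ℝ, r ∈ Set.Ioo (0:ℝ) 1 → ‖taylorCoeff h k‖ ≤ M * r⁻¹ ^ k := by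
    intro r hr
    obtain ⟨hr0, hr1⟩ := hr
    lift r to NNReal using hr0.le with R
    have hsub : Metric.closedBall (0:ℂ) R ⊆ Metric.ball (0:ℂ) 1 := fun z hz => by
      rw [Metric.mem_closedBall] at hz
      rw [Metric.mem_ball]
      exact lt_of_le_of_lt hz hr1
    have hd : DifferentiableOn ℂ h (Metric.closedBall 0 R) := h_an.mono hsub
    have hR0 : 0 < R := by exact_mod_cast hr0
    have HP := hd.hasFPowerSeriesOnBall hR0
    set p := cauchyPowerSeries h 0 R with hp
    -- taylorCoeff h k = p k (fun _ => 1)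
    have e1 : (k.factorial : ℂ) * (p k fun _ => 1) = iteratedDeriv k h 0 := by
      have := HP.factorial_smul (y := (1:ℂ)) k
      rw [iteratedDeriv_eq_iteratedFDeriv]
      rw [← this, nsmul_eq_mul]
    have e2 : taylorCoeff h k = p k fun _ => 1 := by
      rw [taylorCoeff, ← e1]
      have : (k.factorial : ℂ) ≠ 0 := by exact_mod_cast k.factorial_ne_zero
      field_simp
    rw [e2]
    have hle1 : ‖p k fun _ => 1‖ ≤ ‖p k‖ := by
      calc ‖p k fun _ => 1‖ ≤ ‖p k‖ * ∏ _i : Fin k, ‖(1:ℂ)‖ :=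
        (p k).le_opNorm _
      _ = ‖p k‖ := by simp
    have hcont : Continuous fun θ : ℝ => h (circleMap 0 R θ) := by
      refine h_an.continuousOn.comp_continuous (continuous_circleMap 0 R) ?_
      intro θ
      rw [Metric.mem_ball]
      simp only [dist_zero_right]
      rw [show ‖circleMap 0 (R:ℝ) θ‖ = |(R:ℝ)| from norm_circleMap_zero R θ]
      calc |(R:ℝ)| = R := _root_.abs_of_nonneg R.coe_nonneg
      _ < 1 := hr1
    have hint : (∫ θ : ℝ in (0)..2 * π, ‖h (circleMap 0 R θ)‖) ≤ 2 * π * M := by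
      have : (∫ θ : ℝ in (0)..2 * π, ‖h (circleMap 0 R θ)‖) ≤
          ∫ _θ : ℝ in (0)..2 * π, M := by
        apply intervalIntegral.integral_mono_on Real.two_pi_pos.le
        · exact (hcont.norm).intervalIntegrable _ _
        · exact intervalIntegrable_const
        · intro θ _
          apply hM
          rw [Metric.mem_ball]
          simp only [dist_zero_right]
          rw [show ‖circleMap 0 (R:ℝ) θ‖ = |(R:ℝ)| from norm_circleMap_zero R θ]
          calc |(R:ℝ)| = R := _root_.abs_of_nonneg R.coe_nonneg
          _ < 1 := hr1
      rwa [intervalIntegral.integral_const, smul_eq_mul, sub_zero] at this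
    have hle2 := norm_cauchyPowerSeries_le h 0 R k
    calc ‖p k fun _ => 1‖ ≤ ‖p k‖ := hle1
    _ ≤ ((2 * π)⁻¹ * ∫ θ : ℝ in (0)..2 * π, ‖h (circleMap 0 R θ)‖) * |(R:ℝ)|⁻¹ ^ k :=
      hle2
    _ ≤ ((2 * π)⁻¹ * (2 * π * M)) * |(R:ℝ)|⁻¹ ^ k := by
      apply mul_le_mul_of_nonneg_right
      · exact mul_le_mul_of_nonneg_left hint (by positivity)
      · positivity
    _ = M * (R:ℝ)⁻¹ ^ k := by
      rw [_root_.abs_of_nonneg R.coe_nonneg]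
      have h2pi : (2 * π) ≠ 0 := Real.two_pi_pos.ne'
      field_simp
  -- take the limit r → 1⁻
  have htend : Tendsto (fun r : ℝ => M * r⁻¹ ^ k) (𝓝[<] (1:ℝ)) (𝓝 M) := by
    have hc : ContinuousAt (fun r : ℝ => M * r⁻¹ ^ k) 1 :=
      continuousAt_const.mul ((continuousAt_inv₀ one_ne_zero).pow k)
    have h2 : Tendsto (fun r : ℝ => M * r⁻¹ ^ k) (𝓝[<] (1:ℝ)) (𝓝 (M * 1⁻¹ ^ k)) :=
      hc.tendsto.mono_left nhdsWithin_le_nhds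
    simpa using h2
  refine ge_of_tendsto htend ?_
  filter_upwards [Ioo_mem_nhdsLT_of_mem (show (1:ℝ) ∈ Set.Ioc 0 1 by norm_num)]
    with r hr
  exact key r hr

/-- **Co-analytic Toeplitz operators preserve rapid spectral decay.** If f has
coefficients fₙ = O(exp(-c√n)) and h is bounded analytic on 𝔻 with Taylor
coefficients hₖ, then gₙ = ∑ₖ conj(hₖ) f_{n+k} converges absolutely and
(gₙ) = T_{h̄}f again has rapid spectral decay. -/
theorem toeplitz_preserves_rapid_spectral_decay
    (f : ℕ → ℂ)
    (hRSD : ∃ c > (0:ℝ), ∃ C : ℝ, ∀ n : ℕ, ‖f n‖ * Real.exp (c * Real.sqrt n) ≤ C)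
    (h : ℂ → ℂ)
    (h_an : DifferentiableOn ℂ h (Metric.ball 0 1))
    (h_bd : ∃ C, ∀ z ∈ Metric.ball (0:ℂ) 1, ‖h z‖ ≤ C) :
    (∀ n : ℕ,
      Summable (fun k : ℕ => ‖(starRingEnd ℂ) (taylorCoeff h k) * f (n + k)‖)) ∧
    ∃ c' > (0:ℝ), ∃ C : ℝ, ∀ n : ℕ,
      ‖∑' k : ℕ, (starRingEnd ℂ) (taylorCoeff h k) * f (n + k)‖ *
        Real.exp (c' * Real.sqrt n) ≤ C := by
  obtain ⟨c, hc, C, hC⟩ := hRSD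
  obtain ⟨M, hM⟩ := h_bd
  have hM0 : 0 ≤ M := le_trans (norm_nonneg _) (hM 0 (by simp))
  have hC0 : 0 ≤ C := le_trans (by positivity) (hC 0)
  have hcoeff : ∀ k, ‖taylorCoeff h k‖ ≤ M := taylorCoeff_le_bound h_an hM
  have hf : ∀ m : ℕ, ‖f m‖ ≤ C * Real.exp (-(c * Real.sqrt m)) := by
    intro m
    have := hC m
    have hepos : 0 < Real.exp (c * Real.sqrt m) := Real.exp_pos _
    rw [Real.exp_neg]
    rw [← le_div_iff₀ hepos] at this
    rwa [div_eq_mul_inv] at this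
  -- key termwise bound
  have hterm : ∀ n k : ℕ,
      ‖(starRingEnd ℂ) (taylorCoeff h k) * f (n + k)‖ ≤
        M * C * Real.exp (-(c / 2 * Real.sqrt n)) *
          Real.exp (-(c / 2 * Real.sqrt k)) := by
    intro n k
    have hsq : c * Real.sqrt (n + k) ≥ c / 2 * Real.sqrt n + c / 2 * Real.sqrt k := by
      have := sqrt_add_le n k
      nlinarith [Real.sqrt_nonneg (n:ℝ), Real.sqrt_nonneg (k:ℝ)]
    have h1 : Real.exp (-(c * Real.sqrt (n + k))) ≤
        Real.exp (-(c / 2 * Real.sqrt n)) * Real.exp (-(c / 2 * Real.sqrt k)) := by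
      rw [← Real.exp_add]
      apply Real.exp_le_exp.mpr
      linarith
    calc ‖(starRingEnd ℂ) (taylorCoeff h k) * f (n + k)‖
        = ‖taylorCoeff h k‖ * ‖f (n + k)‖ := by
          rw [norm_mul, RCLike.norm_conj]
    _ ≤ M * (C * Real.exp (-(c * Real.sqrt (n + k)))) := by
        apply mul_le_mul (hcoeff k) ?_ (norm_nonneg _) hM0
        have := hf (n + k)
        rwa [Nat.cast_add] at this
    _ ≤ M * (C * (Real.exp (-(c / 2 * Real.sqrt n)) *
          Real.exp (-(c / 2 * Real.sqrt k)))) := by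
        apply mul_le_mul_of_nonneg_left ?_ hM0
        exact mul_le_mul_of_nonneg_left h1 hC0
    _ = M * C * Real.exp (-(c / 2 * Real.sqrt n)) *
          Real.exp (-(c / 2 * Real.sqrt k)) := by ring
  have hc2 : 0 < c / 2 := by linarith
  have hsummg : Summable (fun k : ℕ => Real.exp (-(c / 2 * Real.sqrt k))) :=
    summable_exp_neg_sqrt hc2
  have hsummable : ∀ n : ℕ,
      Summable (fun k : ℕ => ‖(starRingEnd ℂ) (taylorCoeff h k) * f (n + k)‖) := by
    intro n
    apply Summable.of_nonneg_of_le (fun k => norm_nonneg _) (hterm n)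
    exact hsummg.mul_left _
  refine ⟨hsummable, c / 2, hc2, M * C * (∑' k : ℕ, Real.exp (-(c / 2 * Real.sqrt k))),
    fun n => ?_⟩
  have hgn : ‖∑' k : ℕ, (starRingEnd ℂ) (taylorCoeff h k) * f (n + k)‖ ≤
      M * C * Real.exp (-(c / 2 * Real.sqrt n)) *
        (∑' k : ℕ, Real.exp (-(c / 2 * Real.sqrt k))) := by
    calc ‖∑' k : ℕ, (starRingEnd ℂ) (taylorCoeff h k) * f (n + k)‖
        ≤ ∑' k : ℕ, ‖(starRingEnd ℂ) (taylorCoeff h k) * f (n + k)‖ :=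
          norm_tsum_le_tsum_norm (hsummable n)
    _ ≤ ∑' k : ℕ, M * C * Real.exp (-(c / 2 * Real.sqrt n)) *
          Real.exp (-(c / 2 * Real.sqrt k)) :=
        Summable.tsum_le_tsum (hterm n) (hsummable n) (hsummg.mul_left _)
    _ = M * C * Real.exp (-(c / 2 * Real.sqrt n)) *
          (∑' k : ℕ, Real.exp (-(c / 2 * Real.sqrt k))) := tsum_mul_left
  have hepos : 0 < Real.exp (c / 2 * Real.sqrt n) := Real.exp_pos _
  calc ‖∑' k : ℕ, (starRingEnd ℂ) (taylorCoeff h k) * f (n + k)‖ *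
        Real.exp (c / 2 * Real.sqrt n)
      ≤ (M * C * Real.exp (-(c / 2 * Real.sqrt n)) *
          (∑' k : ℕ, Real.exp (-(c / 2 * Real.sqrt k)))) *
          Real.exp (c / 2 * Real.sqrt n) :=
        mul_le_mul_of_nonneg_right hgn hepos.le
  _ = M * C * (∑' k : ℕ, Real.exp (-(c / 2 * Real.sqrt k))) *
        (Real.exp (-(c / 2 * Real.sqrt n)) * Real.exp (c / 2 * Real.sqrt n)) := by ring
  _ = M * C * (∑' k : ℕ, Real.exp (-(c / 2 * Real.sqrt k))) := by
      rw [← Real.exp_add, neg_add_cancel, Real.exp_zero, mul_one]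
end
end
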